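/- Let E be a finite ground set, M a matroid on E with independence predicate Indep, and f : 2^E → ℝ a monotone submodular set function with f(∅) ≥ 0. Suppose x_1, …, x_k is a greedy sequence: writing S_i = {x_1, …, x_i} (with S_0 = ∅), each S_i is independent, for each i the element x_i maximizes the marginal gain f(S_{i−1} ∪ {x}) − f(S_{i−1}) over all x ∉ S_{i−1} with S_{i−1} ∪ {x} independent, and S_k is a maximal independent set (no x ∉ S_k has S_k ∪ {x} independent). Then for every independent set O of the matroid, f(S_k) ≥ (1/2)·f(O). -/
import Mathlib

/-- Submodular upper bound: `f (B ∪ A) ≤ f A + ∑_{b ∈ B} (f (A ∪ {b}) - f A)`. -/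
lemma greedy_aux_union_bound {E : Type*} [DecidableEq E] (f : Finset E → ℝ)
    (hsub : ∀ A B : Finset E, A ⊆ B → ∀ i ∉ B,
      f (insert i A) - f A ≥ f (insert i B) - f B)
    (A : Finset E) :
    ∀ B : Finset E, f (B ∪ A) ≤ f A + ∑ b ∈ B, (f (insert b A) - f A) := by
  intro B
  induction B using Finset.induction_on with
  | empty => simp
  | @insert b B hb ih =>
    rw [Finset.insert_union, Finset.sum_insert hb]
    by_cases hbA : b ∈ A
    · have h1 : insert b (B ∪ A) = B ∪ A :=
        Finset.insert_eq_self.2 (Finset.mem_union_right _ hbA)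
      have h2 : insert b A = A := Finset.insert_eq_self.2 hbA
      rw [h1, h2]; linarith
    · have hbBA : b ∉ B ∪ A := by simp [hb, hbA]
      have := hsub A (B ∪ A) Finset.subset_union_right b hbBA
      linarith

/-- Abel-summation counting lemma. -/
lemma greedy_aux_abel {E : Type*} [DecidableEq E] (O : Finset E) (g : E → ℕ) (δ : ℕ → ℝ)
    (hanti : ∀ i, δ (i + 1) ≤ δ i) :
    ∀ n : ℕ, (∀ i ≤ n, ((O.filter (fun o => g o < i)).card : ℝ) ≤ i) →
    (∑ o ∈ O.filter (fun o => g o < n), δ (g o))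
      + ((n : ℝ) - (O.filter (fun o => g o < n)).card) * δ n
      ≤ ∑ i ∈ Finset.range n, δ i := by
  intro n
  induction n with
  | zero => simp
  | succ n ih =>
    intro hpre
    have hsplit : O.filter (fun o => g o < n + 1)
        = (O.filter (fun o => g o < n)) ∪ (O.filter (fun o => g o = n)) := by
      ext o
      by_cases h : o ∈ O <;> simp [h, Finset.mem_union] <;> omega
    have hdisj : Disjoint (O.filter (fun o => g o < n)) (O.filter (fun o => g o = n)) := by
      rw [Finset.disjoint_left]
      intro o h1 h2
      simp only [Finset.mem_filter] at h1 h2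
      omega
    have hsum : (∑ o ∈ O.filter (fun o => g o < n + 1), δ (g o))
        = (∑ o ∈ O.filter (fun o => g o < n), δ (g o))
          + ((O.filter (fun o => g o = n)).card : ℝ) * δ n := by
      rw [hsplit, Finset.sum_union hdisj]
      congr 1
      rw [Finset.sum_congr rfl (fun o ho => by
        simp only [Finset.mem_filter] at ho
        rw [ho.2]), Finset.sum_const, nsmul_eq_mul]
    have hcard : ((O.filter (fun o => g o < n + 1)).card : ℝ)
        = ((O.filter (fun o => g o < n)).card : ℝ)
          + ((O.filter (fun o => g o = n)).card : ℝ) := by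
      rw [hsplit, Finset.card_union_of_disjoint hdisj]; push_cast; ring
    have hih := ih (fun i hi => hpre i (by omega))
    have hCn1 := hpre (n + 1) le_rfl
    rw [Finset.sum_range_succ, hsum, hcard]
    set Cn : ℝ := ((O.filter (fun o => g o < n)).card : ℝ)
    set c : ℝ := ((O.filter (fun o => g o = n)).card : ℝ)
    have hnn : (0:ℝ) ≤ (n:ℝ) + 1 - (Cn + c) := by
      push_cast at hCn1 ⊢
      linarith
    have hkey : ((n:ℝ) + 1 - (Cn + c)) * δ (n + 1) ≤ ((n:ℝ) + 1 - (Cn + c)) * δ n :=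
      mul_le_mul_of_nonneg_left (hanti n) hnn
    push_cast
    nlinarith [hih]



/-- Greedy 1/2-approximation for maximizing a monotone submodular function over a
matroid.  The independence predicate `Indep` satisfies the matroid axioms, `f` is
monotone and submodular with `f ∅ ≥ 0`, and `x 1, …, x k` is a greedy sequence with
partial solutions `S 0 = ∅`, `S (i+1) = S i ∪ {x (i+1)}`: each `S i` is independent,
each `x (i+1)` maximizes the marginal gain among feasible additions, and `S k` is a
maximal independent set.  Then for every independent set `O`, `f (S k) ≥ f O / 2`. -/
theorem greedy_matroid_half_approx {E : Type*} [Fintype E] [DecidableEq E]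
    (Indep : Finset E → Prop)
    (hI1 : Indep ∅)
    (hI2 : ∀ A B : Finset E, A ⊆ B → Indep B → Indep A)
    (hI3 : ∀ A B : Finset E, Indep A → Indep B → A.card < B.card →
      ∃ e ∈ B, e ∉ A ∧ Indep (insert e A))
    (f : Finset E → ℝ)
    (hmono : ∀ A B : Finset E, A ⊆ B → f A ≤ f B)
    (hsub : ∀ A B : Finset E, A ⊆ B → ∀ i ∉ B,
      f (insert i A) - f A ≥ f (insert i B) - f B)
    (hf0 : 0 ≤ f ∅)
    (k : ℕ) (x : ℕ → E) (S : ℕ → Finset E)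
    (hS0 : S 0 = ∅)
    (hSsucc : ∀ i < k, S (i + 1) = insert (x (i + 1)) (S i))
    (hnew : ∀ i < k, x (i + 1) ∉ S i)
    (hindep : ∀ i ≤ k, Indep (S i))
    (hgreedy : ∀ i < k, ∀ y ∉ S i, Indep (insert y (S i)) →
      f (insert y (S i)) - f (S i) ≤ f (insert (x (i + 1)) (S i)) - f (S i))
    (hmaximal : ∀ y ∉ S k, ¬ Indep (insert y (S k)))
    (O : Finset E) (hO : Indep O) :
    f (S k) ≥ (1 / 2) * f O := by
  classical
  -- basic structural facts
  have Smono : ∀ i j, i ≤ j → j ≤ k → S i ⊆ S j := by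
    intro i j hij
    induction j, hij using Nat.le_induction with
    | base => intro _; exact subset_rfl
    | succ n hn ih =>
      intro h
      refine (ih (by omega)).trans ?_
      rw [hSsucc n (by omega)]
      exact Finset.subset_insert _ _
  have cardS : ∀ i ≤ k, (S i).card = i := by
    intro i
    induction i with
    | zero => intro _; simp [hS0]
    | succ n ih =>
      intro h
      rw [hSsucc n (by omega), Finset.card_insert_of_notMem (hnew n (by omega)),
        ih (by omega)]
  -- the padded marginal-gain sequence
  set δ : ℕ → ℝ := fun i => if i < k then f (S (i + 1)) - f (S i) else 0 with hδ
  have hδval : ∀ i < k, δ i = f (S (i + 1)) - f (S i) := by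
    intro i hi; simp only [hδ, if_pos hi]
  have hδnonneg : ∀ i, 0 ≤ δ i := by
    intro i
    simp only [hδ]
    split
    · rename_i h
      have := hmono (S i) (S (i + 1)) (Smono i (i + 1) (by omega) (by omega))
      linarith
    · exact le_refl 0
  have hδanti : ∀ i, δ (i + 1) ≤ δ i := by
    intro i
    by_cases h1 : i + 1 < k
    · rw [hδval i (by omega), hδval (i + 1) h1]
      -- δ(i+1) = f(insert x(i+2) (S(i+1))) - f(S(i+1))
      have hx2 : x (i + 2) ∉ S (i + 1) := hnew (i + 1) h1
      have hx2i : x (i + 2) ∉ S i := fun h =>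
        hx2 (Smono i (i + 1) (by omega) (by omega) h)
      have hins : Indep (insert (x (i + 2)) (S i)) := by
        refine hI2 _ (S (i + 2)) ?_ (hindep (i + 2) (by omega))
        rw [hSsucc (i + 1) h1, hSsucc i (by omega)]
        intro a ha
        rcases Finset.mem_insert.1 ha with h | h
        · exact Finset.mem_insert.2 (Or.inl h)
        · exact Finset.mem_insert.2 (Or.inr (Finset.mem_insert.2 (Or.inr h)))
      have h2 : f (insert (x (i + 2)) (S (i + 1))) - f (S (i + 1))
          ≤ f (insert (x (i + 2)) (S i)) - f (S i) :=
        hsub (S i) (S (i + 1)) (Smono i (i + 1) (by omega) (by omega)) _ hx2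
      have h3 := hgreedy i (by omega) (x (i + 2)) hx2i hins
      rw [hSsucc (i + 1) h1, hSsucc i (by omega)] at *
      linarith
    · have : δ (i + 1) = 0 := by simp only [hδ, if_neg h1]
      rw [this]
      exact hδnonneg i
  -- blocking time t for elements of O
  have hPk : ∀ o, o ∈ S k ∨ ¬ Indep (insert o (S k)) := by
    intro o
    by_cases h : o ∈ S k
    · exact Or.inl h
    · exact Or.inr (hmaximal o h)
  have hT : ∀ o : E, ∃ j : ℕ, o ∈ O →
      ((o ∈ S j ∨ ¬ Indep (insert o (S j))) ∧
        (∀ i < j, o ∉ S i ∧ Indep (insert o (S i))) ∧ 1 ≤ j ∧ j ≤ k) := by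
    intro o
    by_cases ho : o ∈ O
    · have hex : ∃ i, o ∈ S i ∨ ¬ Indep (insert o (S i)) := ⟨k, hPk o⟩
      refine ⟨Nat.find hex, fun _ => ⟨Nat.find_spec hex, ?_, ?_, Nat.find_le (hPk o)⟩⟩
      · intro i hi
        have := Nat.find_min hex hi
        push_neg at this
        exact this
      · by_contra h
        push_neg at h
        interval_cases h' : Nat.find hex
        · have := Nat.find_spec hex
          rw [h'] at this
          rcases this with h1 | h1
          · rw [hS0] at h1; exact absurd h1 (Finset.notMem_empty o)
          · rw [hS0] at h1
            exact h1 (hI2 _ O (by simpa using ho) hO)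
    · exact ⟨0, fun h => absurd h ho⟩
  choose t ht using hT
  set g : E → ℕ := fun o => t o - 1 with hg
  have hglt : ∀ o ∈ O, g o < k := by
    intro o ho
    have := ht o ho
    simp only [hg]
    omega
  -- each element of O: marginal gain at S k is at most δ (g o)
  have hmarg : ∀ o ∈ O, f (insert o (S k)) - f (S k) ≤ δ (g o) := by
    intro o ho
    obtain ⟨hspec, hmin, h1, hk'⟩ := ht o ho
    have hik : g o < k := hglt o ho
    have hto : t o = g o + 1 := by simp only [hg]; omega
    by_cases hoSk : o ∈ S k
    · have : insert o (S k) = S k := Finset.insert_eq_self.2 hoSk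
      rw [this]
      have := hδnonneg (g o)
      linarith
    · have hpre := hmin (g o) (by omega)
      have hgree := hgreedy (g o) hik o hpre.1 hpre.2
      have hsubm : f (insert o (S k)) - f (S k)
          ≤ f (insert o (S (g o))) - f (S (g o)) :=
        hsub (S (g o)) (S k) (Smono _ k (by omega) le_rfl) o hoSk
      rw [hδval (g o) hik, hSsucc (g o) hik]
      linarith
  -- counting: at most i elements of O are blocked by time i
  have hcount : ∀ i ≤ k, ((O.filter (fun o => g o < i)).card : ℝ) ≤ i := by
    intro i hik
    have hA : (O.filter (fun o => g o < i)).card ≤ i := by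
      by_contra h
      push_neg at h
      have hcardSi : (S i).card = i := cardS i hik
      have hAindep : Indep (O.filter (fun o => g o < i)) :=
        hI2 _ O (Finset.filter_subset _ _) hO
      obtain ⟨e, heA, heS, heI⟩ :=
        hI3 (S i) _ (hindep i hik) hAindep (by omega)
      simp only [Finset.mem_filter] at heA
      obtain ⟨heO, hegi⟩ := heA
      obtain ⟨hspec, hmin, h1, hk'⟩ := ht e heO
      have hte : t e ≤ i := by simp only [hg] at hegi; omega
      -- P e (t e) holds; transport to index i
      rcases hspec with h | h
      · exact heS (Smono (t e) i hte hik h)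
      · exact h (hI2 _ (insert e (S i))
          (Finset.insert_subset_insert _ (Smono (t e) i hte hik)) heI)
    exact_mod_cast hA
  -- assemble
  have hOfilter : O.filter (fun o => g o < k) = O :=
    Finset.filter_true_of_mem (fun o ho => hglt o ho)
  have habel := greedy_aux_abel O g δ hδanti k hcount
  rw [hOfilter] at habel
  have hδk : δ k = 0 := by simp only [hδ, if_neg (lt_irrefl k)]
  rw [hδk, mul_zero, add_zero] at habel
  have htel : ∑ i ∈ Finset.range k, δ i = f (S k) - f (S 0) := by
    rw [Finset.sum_congr rfl (fun i hi => hδval i (Finset.mem_range.1 hi))]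
    exact Finset.sum_range_sub (fun i => f (S i)) k
  have hsum1 : ∑ o ∈ O, (f (insert o (S k)) - f (S k)) ≤ ∑ o ∈ O, δ (g o) :=
    Finset.sum_le_sum hmarg
  have hub := greedy_aux_union_bound f hsub (S k) O
  have hOle : f O ≤ f (O ∪ S k) := hmono _ _ Finset.subset_union_left
  rw [hS0] at htel
  linarith
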